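/- Fix $N \ge 1$, $K = 1$, and constants $M, A \ge 0$. Define $S(N, A) = \min \sum_{n=0}^{N-1} \eta_n^2 A_n^2$ over all $(\eta_0,\dots,\eta_{N-1}) \in [0,1]^N$ with $\eta_{N-1} = 1$, where $A_0 = A$ and $A_{n+1} = (1-\eta_n)A_n + M$. Then $S(N, A) = \frac{1}{N}(A + (N-1)M)^2$ if $A \ge M$, and $S(N, A) = A^2 + (N-1)M^2$ if $A < M$. In both cases $S(N,A) \le \frac{2}{N}(A + (N-1)M)^2$. -/

import Mathlib

noncomputable section

/-- The sequence `A_n` of the shift-optimization problem. -/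
def shiftA (K M A : ℝ) (η : ℕ → ℝ) : ℕ → ℝ
  | 0 => A
  | (n + 1) => K * (1 - η n) * shiftA K M A η n + M

/-- The objective of the shift-optimization problem. -/
def shiftObj (K M A : ℝ) (N : ℕ) (η : ℕ → ℝ) : ℝ :=
  ∑ n ∈ Finset.range N, (η n) ^ 2 * (shiftA K M A η n) ^ 2

/-- The value `S(N, A)` of the shift-optimization problem. -/
def Sval (K M A : ℝ) (N : ℕ) : ℝ :=
  sInf {s : ℝ | ∃ η : ℕ → ℝ, (∀ n < N, 0 ≤ η n ∧ η n ≤ 1) ∧ η (N - 1) = 1 ∧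
    s = shiftObj K M A N η}

end

lemma shiftA_sum (M A : ℝ) (η : ℕ → ℝ) (n : ℕ) :
    shiftA 1 M A η n + ∑ k ∈ Finset.range n, η k * shiftA 1 M A η k = A + n * M := by
  induction n with
  | zero => simp [shiftA]
  | succ n ih =>
      rw [Finset.sum_range_succ]
      show 1 * (1 - η n) * shiftA 1 M A η n + M + _ = _
      push_cast
      linear_combination ih

lemma shiftA_nonneg (M A : ℝ) (hM : 0 ≤ M) (hA : 0 ≤ A) (η : ℕ → ℝ) (n : ℕ)
    (h : ∀ k < n, η k ≤ 1) : 0 ≤ shiftA 1 M A η n := by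
  induction n with
  | zero => exact hA
  | succ n ih =>
      have h1 : 0 ≤ shiftA 1 M A η n := ih fun k hk => h k (hk.trans (Nat.lt_succ_self n))
      have h2 : η n ≤ 1 := h n (Nat.lt_succ_self n)
      show 0 ≤ 1 * (1 - η n) * shiftA 1 M A η n + M
      have := mul_nonneg (by linarith : (0:ℝ) ≤ 1 - η n) h1
      linarith

/-- Lower bound for the objective. -/
lemma shiftObj_lower (M A : ℝ) (hM : 0 ≤ M) (hA : 0 ≤ A) (m : ℕ) (η : ℕ → ℝ)
    (hfeas : ∀ n < m + 1, 0 ≤ η n ∧ η n ≤ 1) (hlast : η m = 1) :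
    (if M ≤ A then (A + m * M) ^ 2 / (m + 1) else A ^ 2 + m * M ^ 2) ≤
      shiftObj 1 M A (m + 1) η := by
  set b : ℕ → ℝ := fun n => η n * shiftA 1 M A η n with hb
  have hsum : ∑ k ∈ Finset.range (m + 1), b k = A + m * M := by
    have h1 := shiftA_sum M A η m
    rw [Finset.sum_range_succ]
    have : b m = shiftA 1 M A η m := by simp [hb, hlast]
    rw [this]
    linarith
  have hobj : shiftObj 1 M A (m + 1) η = ∑ n ∈ Finset.range (m + 1), (b n) ^ 2 := by
    unfold shiftObj
    exact Finset.sum_congr rfl fun n _ => by simp [hb, mul_pow]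
  by_cases hMA : M ≤ A
  · rw [if_pos hMA]
    have hcs := sq_sum_le_card_mul_sum_sq (s := Finset.range (m + 1)) (f := b)
    rw [hsum, Finset.card_range] at hcs
    have hm1 : (0:ℝ) < (m:ℝ) + 1 := by positivity
    rw [div_le_iff₀ hm1, hobj]
    push_cast at hcs ⊢
    nlinarith [hcs]
  · rw [if_neg hMA]
    have hAM : A < M := lt_of_not_ge hMA
    have hb0 : b 0 ≤ A := by
      have h0 := hfeas 0 (Nat.succ_pos m)
      have : shiftA 1 M A η 0 = A := rfl
      simp only [hb, this]
      calc η 0 * A ≤ 1 * A := mul_le_mul_of_nonneg_right h0.2 hA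
        _ = A := one_mul A
    have h2 : ∑ i ∈ Finset.range m, b (i + 1) = A + m * M - b 0 := by
      have h := Finset.sum_range_succ' b m
      rw [hsum] at h
      linarith
    have h3 : 2 * M * (A + m * M - b 0) - m * M ^ 2 ≤
        ∑ i ∈ Finset.range m, (b (i + 1)) ^ 2 := by
      have hle : ∑ i ∈ Finset.range m, (2 * M * b (i + 1) - M ^ 2) ≤
          ∑ i ∈ Finset.range m, (b (i + 1)) ^ 2 :=
        Finset.sum_le_sum fun i _ => by nlinarith [sq_nonneg (b (i + 1) - M)]
      rw [Finset.sum_sub_distrib, ← Finset.mul_sum, h2, Finset.sum_const,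
        Finset.card_range, nsmul_eq_mul] at hle
      linarith
    have hsplit : ∑ n ∈ Finset.range (m + 1), (b n) ^ 2 =
        (∑ i ∈ Finset.range m, (b (i + 1)) ^ 2) + (b 0) ^ 2 :=
      Finset.sum_range_succ' (fun n => (b n) ^ 2) m
    have hprod : 0 ≤ (M - A) * (A - b 0) :=
      mul_nonneg (by linarith) (by linarith)
    rw [hobj, hsplit]
    nlinarith [sq_nonneg (b 0 - A)]

/-- The constant shift `η ≡ 1` is feasible and achieves `A² + (N-1)M²`. -/
lemma shiftObj_one (M A : ℝ) (m : ℕ) :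
    shiftObj 1 M A (m + 1) (fun _ => 1) = A ^ 2 + m * M ^ 2 := by
  have hA : ∀ n : ℕ, shiftA 1 M A (fun _ => 1) (n + 1) = M := by
    intro n
    show 1 * (1 - 1) * shiftA 1 M A (fun _ => 1) n + M = M
    ring
  unfold shiftObj
  rw [Finset.sum_range_succ' (fun n => ((1:ℝ)) ^ 2 * (shiftA 1 M A (fun _ => 1) n) ^ 2) m]
  have : ∀ i ∈ Finset.range m,
      (1:ℝ) ^ 2 * (shiftA 1 M A (fun _ => 1) (i + 1)) ^ 2 = M ^ 2 := by
    intro i _; rw [hA i]; ring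
  rw [Finset.sum_congr rfl this, Finset.sum_const, Finset.card_range, nsmul_eq_mul]
  show (m:ℝ) * M ^ 2 + 1 ^ 2 * A ^ 2 = A ^ 2 + m * M ^ 2
  ring

theorem statement_9 (N : ℕ) (hN : 1 ≤ N) (M A : ℝ) (hM : 0 ≤ M) (hA : 0 ≤ A) :
    (Sval 1 M A N =
      if M ≤ A then (A + ((N : ℝ) - 1) * M) ^ 2 / N else A ^ 2 + ((N : ℝ) - 1) * M ^ 2) ∧
    Sval 1 M A N ≤ 2 / N * (A + ((N : ℝ) - 1) * M) ^ 2 := by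
  obtain ⟨m, rfl⟩ : ∃ m, N = m + 1 := ⟨N - 1, (Nat.succ_pred_eq_of_pos hN).symm⟩
  have hcast : ((m + 1 : ℕ) : ℝ) - 1 = (m : ℝ) := by push_cast; ring
  have hm1 : (0:ℝ) < (m:ℝ) + 1 := by positivity
  set T : ℝ := A + m * M with hT
  set tgt : ℝ := if M ≤ A then T ^ 2 / ((m:ℝ) + 1) else A ^ 2 + m * M ^ 2 with htgt
  have hTnn : 0 ≤ T := by positivity
  -- membership
  have hmem : tgt ∈ {s : ℝ | ∃ η : ℕ → ℝ, (∀ n < m + 1, 0 ≤ η n ∧ η n ≤ 1) ∧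
      η (m + 1 - 1) = 1 ∧ s = shiftObj 1 M A (m + 1) η} := by
    by_cases hMA : M ≤ A
    · rcases eq_or_lt_of_le hTnn with hT0 | hTpos
      · -- degenerate case T = 0 : A = 0 and m·M = 0
        refine ⟨fun _ => 1, fun n _ => ⟨zero_le_one, le_refl 1⟩, rfl, ?_⟩
        rw [hT] at hT0
        have hA0 : A = 0 := by nlinarith [mul_nonneg (Nat.cast_nonneg m : (0:ℝ) ≤ m) hM]
        have hmM : (m:ℝ) * M = 0 := by rw [hA0] at hT0; linarith
        rw [shiftObj_one, htgt, if_pos hMA, hT]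
        have h5 : (m:ℝ) * M ^ 2 = 0 := by
          have : (m:ℝ) * M ^ 2 = ((m:ℝ) * M) * M := by ring
          rw [this, hmM, zero_mul]
        rw [h5, hA0, zero_add, hmM]
        norm_num
      · -- main case : decreasing schedule
        set c : ℝ := T / ((m:ℝ) + 1) with hc
        have hcpos : 0 < c := div_pos hTpos hm1
        have hcT : ((m:ℝ) + 1) * c = T := by rw [hc]; field_simp
        have hcM : M ≤ c := by nlinarith
        set η : ℕ → ℝ := fun n => c / (A + n * (M - c)) with hη
        have hAm : A + (m:ℝ) * (M - c) = c := by rw [hT] at hcT; nlinarith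
        have hden : ∀ n : ℕ, n ≤ m → c ≤ A + n * (M - c) := by
          intro n hn
          have hn' : (n:ℝ) ≤ (m:ℝ) := by exact_mod_cast hn
          nlinarith [mul_nonneg (by linarith : (0:ℝ) ≤ (m:ℝ) - n) (by linarith : (0:ℝ) ≤ c - M)]
        have hApos : ∀ n : ℕ, n ≤ m → 0 < A + n * (M - c) := fun n hn =>
          lt_of_lt_of_le hcpos (hden n hn)
        have hAform : ∀ n : ℕ, n ≤ m → shiftA 1 M A η n = A + n * (M - c) := by
          intro n
          induction n with
          | zero => intro _; simp [shiftA]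
          | succ n ih =>
              intro hn
              have hn' : n ≤ m := Nat.le_of_succ_le hn
              have hne : A + n * (M - c) ≠ 0 := ne_of_gt (hApos n hn')
              show 1 * (1 - η n) * shiftA 1 M A η n + M = _
              rw [ih hn', hη]
              push_cast
              field_simp
              ring
        refine ⟨η, ?_, ?_, ?_⟩
        · intro n hn
          have hn' : n ≤ m := Nat.lt_succ_iff.mp hn
          constructor
          · exact div_nonneg hcpos.le (hApos n hn').le
          · rw [hη]
            exact (div_le_one (hApos n hn')).mpr (hden n hn')
        · show c / (A + (m:ℕ) * (M - c)) = 1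
          rw [show ((m:ℕ):ℝ) = (m:ℝ) from rfl, hAm]
          exact div_self (ne_of_gt hcpos)
        · rw [htgt, if_pos hMA]
          unfold shiftObj
          have : ∀ n ∈ Finset.range (m + 1),
              (η n) ^ 2 * (shiftA 1 M A η n) ^ 2 = c ^ 2 := by
            intro n hn
            have hn' : n ≤ m := Nat.lt_succ_iff.mp (Finset.mem_range.mp hn)
            rw [hAform n hn', hη]
            have hne : A + n * (M - c) ≠ 0 := ne_of_gt (hApos n hn')
            field_simp
          rw [Finset.sum_congr rfl this, Finset.sum_const, Finset.card_range, nsmul_eq_mul]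
          have : T ^ 2 = (((m:ℝ) + 1) * c) ^ 2 := by rw [hcT]
          rw [this]
          push_cast
          field_simp
    · refine ⟨fun _ => 1, fun n _ => ⟨zero_le_one, le_refl 1⟩, rfl, ?_⟩
      rw [shiftObj_one, htgt, if_neg hMA]
  -- lower bound
  have hlb : ∀ s ∈ {s : ℝ | ∃ η : ℕ → ℝ, (∀ n < m + 1, 0 ≤ η n ∧ η n ≤ 1) ∧
      η (m + 1 - 1) = 1 ∧ s = shiftObj 1 M A (m + 1) η}, tgt ≤ s := by
    rintro s ⟨η, hfeas, hlast, rfl⟩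
    have := shiftObj_lower M A hM hA m η hfeas hlast
    rw [htgt]
    convert this using 2
  have hSval : Sval 1 M A (m + 1) = tgt := by
    unfold Sval
    exact IsLeast.csInf_eq ⟨hmem, hlb⟩
  constructor
  · rw [hSval, htgt, hcast, hT]
    push_cast
    norm_num
  · rw [hSval, hcast]
    by_cases hMA : M ≤ A
    · rw [htgt, if_pos hMA]
      have h1 : 2 / ((m:ℝ) + 1) * T ^ 2 - T ^ 2 / ((m:ℝ) + 1) = T ^ 2 / ((m:ℝ) + 1) := by
        ring
      have h2 : 0 ≤ T ^ 2 / ((m:ℝ) + 1) := by positivity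
      push_cast
      linarith
    · rw [htgt, if_neg hMA]
      have hAM : A < M := lt_of_not_ge hMA
      have hx : (0:ℝ) ≤ (m:ℝ) := Nat.cast_nonneg m
      rcases Nat.eq_zero_or_pos m with hm0 | hmpos
      · subst hm0
        simp only [Nat.cast_zero, zero_mul, add_zero, zero_add]
        norm_num
        nlinarith [sq_nonneg A]
      · have hm1' : (1:ℝ) ≤ (m:ℝ) := by exact_mod_cast hmpos
        push_cast
        rw [div_mul_eq_mul_div, le_div_iff₀ hm1]
        have t1 : 0 ≤ ((m:ℝ) - 1) * (M - A) * ((m:ℝ) * M + A) := by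
          apply mul_nonneg (mul_nonneg (by linarith) (by linarith))
          nlinarith
        have t2 : 0 ≤ A * M * ((m:ℝ) + 1) ^ 2 := by positivity
        nlinarith [t1, t2]
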